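/- Let (P_t)_{t≥0} be a Feller Markov semigroup on a compact metric space S, acting continuously on initial distributions, and fix ν ∈ P(S). Define the time-averaged measures μ_T(A) := (1/T)∫₀^T (ν P_t)(A) dt. Then the family {μ_T : T ≥ 1} is tight, and any weak limit point μ₀ of a sequence μ_{T_n} with T_n → ∞ is an invariant measure for the semigroup: ν₀ P_s = ν₀ for all s ≥ 0. -/

import Mathlib

open MeasureTheory ProbabilityTheory Filter
open scoped Topology ENNReal

lemma kb_bind_prob {α S : Type*} [MeasurableSpace α] [MeasurableSpace S]
    (μ : Measure α) [IsProbabilityMeasure μ] (k : Kernel α S) [IsMarkovKernel k] :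
    IsProbabilityMeasure (μ.bind (fun x => k x)) := by
  constructor
  rw [Measure.bind_apply MeasurableSet.univ (Kernel.measurable k).aemeasurable]
  simp [measure_univ]

lemma kb_integral_bind {α : Type*} [MeasurableSpace α] {S : Type*} [MeasurableSpace S]
    (m : Measure α) [IsFiniteMeasure m] (η : α → Measure S) (hη : Measurable η)
    (hprob : ∀ a, IsProbabilityMeasure (η a)) (f : S → ℝ) (hf : Measurable f)
    {C : ℝ} (hC : ∀ x, ‖f x‖ ≤ C) :
    ∫ x, f x ∂(m.bind η) = ∫ a, ∫ x, f x ∂(η a) ∂m := by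
  have hfin : IsFiniteMeasure (m.bind η) := by
    constructor
    rw [Measure.bind_apply MeasurableSet.univ hη.aemeasurable]
    calc ∫⁻ a, (η a) Set.univ ∂m = ∫⁻ _, 1 ∂m := by
          apply lintegral_congr; intro a; haveI := hprob a; simp
      _ < ⊤ := by simpa using (measure_lt_top m Set.univ)
  have hint : Integrable f (m.bind η) :=
    ⟨hf.aestronglyMeasurable, HasFiniteIntegral.of_bounded (C := C) (ae_of_all _ hC)⟩
  have hintη : ∀ a, Integrable f (η a) := fun a => by
    haveI := hprob a
    exact ⟨hf.aestronglyMeasurable, HasFiniteIntegral.of_bounded (C := C) (ae_of_all _ hC)⟩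
  have hmp : Measurable fun x => ENNReal.ofReal (f x) := hf.ennreal_ofReal
  have hmn : Measurable fun x => ENNReal.ofReal (-f x) := hf.neg.ennreal_ofReal
  set Fp : α → ℝ≥0∞ := fun a => ∫⁻ x, ENNReal.ofReal (f x) ∂η a with hFp
  set Fn : α → ℝ≥0∞ := fun a => ∫⁻ x, ENNReal.ofReal (-f x) ∂η a with hFn
  have hFpm : Measurable Fp := (Measure.measurable_lintegral hmp).comp hη
  have hFnm : Measurable Fn := (Measure.measurable_lintegral hmn).comp hη
  have hboundp : ∀ a, Fp a ≤ ENNReal.ofReal C := fun a => by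
    haveI := hprob a
    calc Fp a ≤ ∫⁻ _, ENNReal.ofReal C ∂η a := lintegral_mono fun x =>
          ENNReal.ofReal_le_ofReal ((le_abs_self _).trans ((Real.norm_eq_abs _) ▸ hC x))
      _ = ENNReal.ofReal C := by simp
  have hboundn : ∀ a, Fn a ≤ ENNReal.ofReal C := fun a => by
    haveI := hprob a
    calc Fn a ≤ ∫⁻ _, ENNReal.ofReal C ∂η a := lintegral_mono fun x =>
          ENNReal.ofReal_le_ofReal ((neg_le_abs _).trans ((Real.norm_eq_abs _) ▸ hC x))
      _ = ENNReal.ofReal C := by simp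
  have hplt : ∀ a, Fp a < ⊤ := fun a => lt_of_le_of_lt (hboundp a) ENNReal.ofReal_lt_top
  have hnlt : ∀ a, Fn a < ⊤ := fun a => lt_of_le_of_lt (hboundn a) ENNReal.ofReal_lt_top
  have hintp : Integrable (fun a => (Fp a).toReal) m := by
    refine ⟨hFpm.ennreal_toReal.aestronglyMeasurable,
      HasFiniteIntegral.of_bounded (C := max C 0) (ae_of_all _ fun a => ?_)⟩
    rw [Real.norm_of_nonneg ENNReal.toReal_nonneg]
    exact ENNReal.toReal_le_of_le_ofReal (le_max_right _ _)
      ((hboundp a).trans (ENNReal.ofReal_le_ofReal (le_max_left _ _)))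
  have hintn : Integrable (fun a => (Fn a).toReal) m := by
    refine ⟨hFnm.ennreal_toReal.aestronglyMeasurable,
      HasFiniteIntegral.of_bounded (C := max C 0) (ae_of_all _ fun a => ?_)⟩
    rw [Real.norm_of_nonneg ENNReal.toReal_nonneg]
    exact ENNReal.toReal_le_of_le_ofReal (le_max_right _ _)
      ((hboundn a).trans (ENNReal.ofReal_le_ofReal (le_max_left _ _)))
  rw [integral_eq_lintegral_pos_part_sub_lintegral_neg_part hint,
    Measure.lintegral_bind hη.aemeasurable hmp.aemeasurable, Measure.lintegral_bind hη.aemeasurable hmn.aemeasurable]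
  have hRHS : ∀ a, ∫ x, f x ∂η a = (Fp a).toReal - (Fn a).toReal := fun a =>
    integral_eq_lintegral_pos_part_sub_lintegral_neg_part (hintη a)
  calc (∫⁻ a, Fp a ∂m).toReal - (∫⁻ a, Fn a ∂m).toReal
      = ∫ a, (Fp a).toReal ∂m - ∫ a, (Fn a).toReal ∂m := by
        rw [integral_toReal hFpm.aemeasurable (ae_of_all _ hplt),
          integral_toReal hFnm.aemeasurable (ae_of_all _ hnlt)]
    _ = ∫ a, ((Fp a).toReal - (Fn a).toReal) ∂m := (integral_sub hintp hintn).symm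
    _ = ∫ a, ∫ x, f x ∂η a ∂m := by
        apply integral_congr_ae; exact ae_of_all _ fun a => (hRHS a).symm

theorem krylov_bogolyubov_time_averages
    {S : Type*} [MeasurableSpace S] [MetricSpace S] [CompactSpace S] [BorelSpace S]
    (κ : ℝ → Kernel S S) (hMarkov : ∀ t, IsMarkovKernel (κ t))
    (hsemigroup : ∀ s t : ℝ, 0 ≤ s → 0 ≤ t → κ (s + t) = (κ t) ∘ₖ (κ s))
    (hFeller : ∀ t : ℝ, 0 ≤ t → ∀ f : S → ℝ, Continuous f →
      Continuous fun x => ∫ y, f y ∂(κ t x))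
    (ν : Measure S) [IsProbabilityMeasure ν]
    (hmeas : ∀ A : Set S, MeasurableSet A →
      Measurable fun t : ℝ => (Measure.bind ν (fun x => κ t x)) A)
    (μT : ℝ → Measure S)
    (hμT : ∀ T : ℝ, 0 < T → μT T = (ENNReal.ofReal T)⁻¹ •
      Measure.bind (volume.restrict (Set.Ioc (0 : ℝ) T))
        (fun t => Measure.bind ν (fun x => κ t x))) :
    (∀ ε : ℝ≥0∞, 0 < ε → ∃ K : Set S, IsCompact K ∧
      ∀ T : ℝ, 1 ≤ T → μT T Kᶜ ≤ ε) ∧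
    ∀ (Tn : ℕ → ℝ) (μ₀ : Measure S), IsProbabilityMeasure μ₀ →
      (∀ n, 1 ≤ Tn n) → Tendsto Tn atTop atTop →
      (∀ f : S → ℝ, Continuous f →
        Tendsto (fun n => ∫ x, f x ∂(μT (Tn n))) atTop (𝓝 (∫ x, f x ∂μ₀))) →
      ∀ s : ℝ, 0 ≤ s → Measure.bind μ₀ (fun x => κ s x) = μ₀ := by
  haveI := hMarkov
  constructor
  · exact fun ε hε => ⟨Set.univ, isCompact_univ, fun T hT => by simp⟩
  intro Tn μ₀ hμ₀prob hTn1 hTnTop hweak s hs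
  -- the measure family t ↦ ν P_t
  set η : ℝ → Measure S := fun t => Measure.bind ν (fun x => κ t x) with hηdef
  have hη : Measurable η :=
    Measure.measurable_of_measurable_coe _ (fun A hA => hmeas A hA)
  have hηprob : ∀ t, IsProbabilityMeasure (η t) := fun t => kb_bind_prob ν (κ t)
  -- semigroup property at the level of measures
  have hbb : ∀ t : ℝ, 0 ≤ t →
      Measure.bind (η t) (fun x => κ s x) = η (t + s) := by
    intro t ht
    rw [hηdef]
    simp only
    rw [Measure.bind_bind (Kernel.measurable (κ t)).aemeasurable (Kernel.measurable (κ s)).aemeasurable]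
    have hsg := hsemigroup t s ht hs
    congr 1
    funext x
    rw [hsg, Kernel.comp_apply]
  -- bound for continuous functions
  have bound : ∀ f : S → ℝ, Continuous f → ∃ C : ℝ, 0 ≤ C ∧ ∀ x, ‖f x‖ ≤ C := by
    intro f hf
    obtain ⟨C, hC⟩ := isCompact_univ.exists_bound_of_continuousOn (f := f) hf.continuousOn
    exact ⟨max C 0, le_max_right _ _, fun x => (hC x trivial).trans (le_max_left _ _)⟩
  -- main step: integrals of continuous functions are invariant
  have key : ∀ f : S → ℝ, Continuous f →
      ∫ x, f x ∂(Measure.bind μ₀ (fun x => κ s x)) = ∫ x, f x ∂μ₀ := by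
    intro f hf
    obtain ⟨C, hC0, hC⟩ := bound f hf
    set g : S → ℝ := fun x => ∫ y, f y ∂(κ s x) with hgdef
    have hg : Continuous g := hFeller s hs f hf
    have hgC : ∀ x, ‖g x‖ ≤ C := fun x => by
      calc ‖g x‖ ≤ C * ((κ s x) Set.univ).toReal :=
            norm_integral_le_of_norm_le_const (ae_of_all _ hC)
        _ = C := by simp [measure_univ]
    -- F t = ∫ f d(ν P_t)
    set F : ℝ → ℝ := fun t => ∫ x, f x ∂(η t) with hFdef
    have hFC : ∀ t, ‖F t‖ ≤ C := fun t => by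
      haveI := hηprob t
      calc ‖F t‖ ≤ C * ((η t) Set.univ).toReal :=
            norm_integral_le_of_norm_le_const (ae_of_all _ hC)
        _ = C := by simp [measure_univ]
    have hFm : Measurable F := by
      have : F = fun t => (∫⁻ x, ENNReal.ofReal (f x) ∂η t).toReal -
          (∫⁻ x, ENNReal.ofReal (-f x) ∂η t).toReal := by
        funext t
        haveI := hηprob t
        exact integral_eq_lintegral_pos_part_sub_lintegral_neg_part
          ⟨hf.measurable.aestronglyMeasurable,
            HasFiniteIntegral.of_bounded (C := C) (ae_of_all _ hC)⟩
      rw [this]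
      exact (((Measure.measurable_lintegral hf.measurable.ennreal_ofReal).comp
        hη).ennreal_toReal).sub
        (((Measure.measurable_lintegral hf.measurable.neg.ennreal_ofReal).comp
          hη).ennreal_toReal)
    have hFint : ∀ a b : ℝ, IntervalIntegrable F volume a b := by
      intro a b
      rw [intervalIntegrable_iff]
      haveI : IsFiniteMeasure (volume.restrict (Set.uIoc a b)) := by
        constructor
        rw [Measure.restrict_apply_univ, Set.uIoc]
        exact measure_Ioc_lt_top
      exact ⟨hFm.aestronglyMeasurable.restrict,
        HasFiniteIntegral.of_bounded (C := C) (ae_of_all _ hFC)⟩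
    -- formulas for integrals against μT
    have hf_int : ∀ T : ℝ, 0 < T →
        ∫ x, f x ∂(μT T) = T⁻¹ * ∫ t in (0:ℝ)..T, F t := by
      intro T hT
      rw [hμT T hT, integral_smul_measure,
        kb_integral_bind _ η hη hηprob f hf.measurable hC,
        intervalIntegral.integral_of_le hT.le]
      simp [ENNReal.toReal_inv, ENNReal.toReal_ofReal hT.le, hFdef]
    have hg_int : ∀ T : ℝ, 0 < T →
        ∫ x, g x ∂(μT T) = T⁻¹ * ∫ t in s..(T+s), F t := by
      intro T hT
      rw [hμT T hT, integral_smul_measure,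
        kb_integral_bind _ η hη hηprob g hg.measurable hgC]
      have h1 : ∫ t in Set.Ioc (0:ℝ) T, (∫ x, g x ∂η t) =
          ∫ t in Set.Ioc (0:ℝ) T, F (t + s) := by
        apply setIntegral_congr_fun measurableSet_Ioc
        intro t ht
        haveI := hηprob t
        rw [hFdef]
        simp only
        rw [← hbb t ht.1.le,
          kb_integral_bind (η t) (fun x => κ s x) (Kernel.measurable (κ s))
            (fun x => (hMarkov s).isProbabilityMeasure x) f hf.measurable hC]
      rw [h1, ← intervalIntegral.integral_of_le hT.le,
        intervalIntegral.integral_comp_add_right F s, zero_add]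
      simp [ENNReal.toReal_inv, ENNReal.toReal_ofReal hT.le]
    -- difference bound
    have hdiff : ∀ T : ℝ, 0 < T →
        ‖∫ x, g x ∂(μT T) - ∫ x, f x ∂(μT T)‖ ≤ 2 * C * s * T⁻¹ := by
      intro T hT
      rw [hg_int T hT, hf_int T hT, ← mul_sub]
      have hsplit : (∫ t in s..(T+s), F t) - ∫ t in (0:ℝ)..T, F t =
          (∫ t in T..(T+s), F t) - ∫ t in (0:ℝ)..s, F t := by
        have e1 : (∫ t in (0:ℝ)..s, F t) + ∫ t in s..(T+s), F t =
            ∫ t in (0:ℝ)..(T+s), F t :=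
          intervalIntegral.integral_add_adjacent_intervals (hFint _ _) (hFint _ _)
        have e2 : (∫ t in (0:ℝ)..T, F t) + ∫ t in T..(T+s), F t =
            ∫ t in (0:ℝ)..(T+s), F t :=
          intervalIntegral.integral_add_adjacent_intervals (hFint _ _) (hFint _ _)
        linarith
      rw [norm_mul, hsplit]
      have b1 : ‖∫ t in T..(T+s), F t‖ ≤ C * s := by
        have := intervalIntegral.norm_integral_le_of_norm_le_const
          (C := C) (a := T) (b := T + s) (f := F) (fun x _ => hFC x)
        simpa [abs_of_nonneg hs] using this
      have b2 : ‖∫ t in (0:ℝ)..s, F t‖ ≤ C * s := by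
        have := intervalIntegral.norm_integral_le_of_norm_le_const
          (C := C) (a := (0:ℝ)) (b := s) (f := F) (fun x _ => hFC x)
        simpa [abs_of_nonneg hs] using this
      have : ‖(∫ t in T..(T+s), F t) - ∫ t in (0:ℝ)..s, F t‖ ≤ 2 * C * s := by
        calc ‖(∫ t in T..(T+s), F t) - ∫ t in (0:ℝ)..s, F t‖ ≤
            ‖∫ t in T..(T+s), F t‖ + ‖∫ t in (0:ℝ)..s, F t‖ := norm_sub_le _ _
          _ ≤ 2 * C * s := by linarith
      calc ‖T⁻¹‖ * ‖(∫ t in T..(T+s), F t) - ∫ t in (0:ℝ)..s, F t‖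
          ≤ ‖T⁻¹‖ * (2 * C * s) := by
            apply mul_le_mul_of_nonneg_left this (norm_nonneg _)
        _ = 2 * C * s * T⁻¹ := by
            rw [Real.norm_of_nonneg (inv_nonneg.mpr hT.le)]; ring
    -- pass to the limit
    have hTpos : ∀ n, (0:ℝ) < Tn n := fun n => lt_of_lt_of_le one_pos (hTn1 n)
    have hzero : Tendsto (fun n => ∫ x, g x ∂(μT (Tn n)) - ∫ x, f x ∂(μT (Tn n)))
        atTop (𝓝 0) := by
      apply squeeze_zero_norm (fun n => hdiff (Tn n) (hTpos n))
      have : Tendsto (fun n => (Tn n)⁻¹) atTop (𝓝 0) :=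
        (tendsto_inv_atTop_zero).comp hTnTop
      simpa using this.const_mul (2 * C * s)
    have hgf : Tendsto (fun n => ∫ x, g x ∂(μT (Tn n))) atTop (𝓝 (0 + ∫ x, f x ∂μ₀)) := by
      have := hzero.add (hweak f hf)
      simpa using this
    have hgl := hweak g hg
    have hgeq : ∫ x, g x ∂μ₀ = ∫ x, f x ∂μ₀ := by
      have := tendsto_nhds_unique hgl hgf
      simpa using this
    rw [kb_integral_bind μ₀ (fun x => κ s x) (Kernel.measurable (κ s))
      (fun x => (hMarkov s).isProbabilityMeasure x) f hf.measurable hC]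
    exact hgeq
  -- conclude equality of measures
  haveI : IsProbabilityMeasure (Measure.bind μ₀ (fun x => κ s x)) := kb_bind_prob μ₀ (κ s)
  apply ext_of_forall_lintegral_eq_of_IsFiniteMeasure
  intro fb
  have hc : Continuous fun x => ((fb x : ℝ)) := NNReal.continuous_coe.comp fb.continuous
  obtain ⟨C, hC0, hC⟩ := bound _ hc
  have hlin : ∀ (μ : Measure S), IsProbabilityMeasure μ →
      ∫⁻ x, (fb x : ℝ≥0∞) ∂μ = ENNReal.ofReal (∫ x, (fb x : ℝ) ∂μ) := by
    intro μ hμ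
    haveI := hμ
    have hint : Integrable (fun x => (fb x : ℝ)) μ :=
      ⟨hc.measurable.aestronglyMeasurable,
        HasFiniteIntegral.of_bounded (C := C) (ae_of_all _ hC)⟩
    rw [ofReal_integral_eq_lintegral_ofReal hint (ae_of_all _ fun x => (fb x).coe_nonneg)]
    congr 1
    funext x
    simp
  rw [hlin _ inferInstance, hlin _ hμ₀prob, key _ hc]
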